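/- Fix p, q > N-1 and let V(τ) := 2(q-p)∑_i log sin(τ_i/2) + 2(p+1-N)∑_i log sin(τ_i) + 2∑_{i<j}[ log sin((τ_i-τ_j)/2) + log sin((τ_i+τ_j)/2) ] on the open set {π > τ_1 > ... > τ_N > 0}. Then the gradient system dτ/dt = grad V(τ) is, under the change of variables x_i = cos τ_i, equivalent to the system dx_i/dt = (p-q) - (p+q)x_i + 2∑_{j≠i}(1 - x_i x_j)/(x_i - x_j). -/

import Mathlib

open Finset

lemma cotHalf' (A : ℝ) (h : Real.sin (A/2) ≠ 0) :
    Real.sin A * (Real.cos (A/2) / Real.sin (A/2)) = 1 + Real.cos A := by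
  have h1 := Real.sin_sq_add_cos_sq (A/2)
  rw [show A = 2*(A/2) by ring, Real.sin_two_mul, Real.cos_two_mul]
  field_simp
  nlinarith [h1]

lemma pairId' (u v : ℝ) (hu : Real.sin u ≠ 0) (hv : Real.sin v ≠ 0) :
    -Real.sin (u+v) * (Real.cos u/Real.sin u + Real.cos v/Real.sin v)
      = 2*(1 - Real.cos (u+v) * Real.cos (v-u))/(Real.cos (u+v) - Real.cos (v-u))
        - 2 * Real.cos (u+v) := by
  have e1 : Real.cos u/Real.sin u + Real.cos v/Real.sin v
      = Real.sin (u+v)/(Real.sin u * Real.sin v) := by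
    rw [Real.sin_add]; field_simp; ring
  have e2 : Real.cos (v-u) = Real.cos (u+v) + 2*Real.sin u*Real.sin v := by
    rw [Real.cos_add, Real.cos_sub]; ring
  have hs := Real.sin_sq_add_cos_sq (u+v)
  rw [e1, e2]
  have hne : Real.sin u * Real.sin v ≠ 0 := mul_ne_zero hu hv
  field_simp
  linear_combination (2*Real.sin u*Real.sin v) * hs

lemma pairsym' {N : ℕ} (f : Fin N → ℝ) :
    2 * ∑ pr ∈ (univ : Finset (Fin N × Fin N)).filter (fun pr => pr.1 < pr.2),
        (Real.log (Real.sin ((f pr.1 - f pr.2) / 2))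
          + Real.log (Real.sin ((f pr.1 + f pr.2) / 2)))
      = ∑ j : Fin N, ∑ k ∈ univ.erase j,
        (Real.log (Real.sin ((f j - f k) / 2)) + Real.log (Real.sin ((f j + f k) / 2))) := by
  set g : Fin N × Fin N → ℝ := fun pr =>
    Real.log (Real.sin ((f pr.1 - f pr.2) / 2)) + Real.log (Real.sin ((f pr.1 + f pr.2) / 2))
    with hg
  have hsym : ∀ j k : Fin N, g (j, k) = g (k, j) := by
    intro j k
    simp only [hg]
    rw [show (f k - f j)/2 = -((f j - f k)/2) by ring, Real.sin_neg, Real.log_neg_eq_log,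
      show f k + f j = f j + f k by ring]
  have h1 : ∑ pr ∈ (univ : Finset (Fin N × Fin N)).filter (fun pr => pr.1 < pr.2), g pr
      = ∑ pr ∈ (univ : Finset (Fin N × Fin N)).filter (fun pr => pr.2 < pr.1), g pr := by
    apply Finset.sum_nbij' (fun pr => (pr.2, pr.1)) (fun pr => (pr.2, pr.1)) <;> simp [hsym]
  have h2 : ∑ pr ∈ (univ : Finset (Fin N × Fin N)).filter (fun pr => pr.1 ≠ pr.2), g pr
      = ∑ pr ∈ (univ : Finset (Fin N × Fin N)).filter (fun pr => pr.1 < pr.2), g pr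
        + ∑ pr ∈ (univ : Finset (Fin N × Fin N)).filter (fun pr => pr.2 < pr.1), g pr := by
    rw [← Finset.sum_union]
    · congr 1
      ext pr
      simp only [mem_union, mem_filter, mem_univ, true_and]
      constructor
      · intro h; exact lt_or_gt_of_ne h
      · rintro (h | h); exacts [ne_of_lt h, (ne_of_lt h).symm]
    · rw [Finset.disjoint_filter]
      intro pr _ ha hb
      exact absurd hb (not_lt_of_gt ha)
  have h3 : ∑ pr ∈ (univ : Finset (Fin N × Fin N)).filter (fun pr => pr.1 ≠ pr.2), g pr
      = ∑ j : Fin N, ∑ k ∈ univ.erase j, g (j, k) := by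
    rw [Finset.sum_filter, Fintype.sum_prod_type]
    congr 1
    ext j
    rw [← Finset.sum_filter, Finset.filter_ne]
  rw [two_mul, h1]
  nth_rewrite 1 [← h1]
  rw [← h2, h3]

theorem stmt18 {N : ℕ} (p q : ℝ) (hp : (N : ℝ) - 1 < p) (hq : (N : ℝ) - 1 < q)
    (V : (Fin N → ℝ) → ℝ)
    (hV : ∀ τ : Fin N → ℝ,
      V τ = 2 * (q - p) * ∑ i : Fin N, Real.log (Real.sin (τ i / 2))
        + 2 * (p + 1 - N) * ∑ i : Fin N, Real.log (Real.sin (τ i))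
        + 2 * ∑ pr ∈ (univ : Finset (Fin N × Fin N)).filter (fun pr => pr.1 < pr.2),
            (Real.log (Real.sin ((τ pr.1 - τ pr.2) / 2))
              + Real.log (Real.sin ((τ pr.1 + τ pr.2) / 2))))
    (τ : ℝ → Fin N → ℝ)
    (hrange : ∀ (t : ℝ) (i : Fin N), 0 < τ t i ∧ τ t i < Real.pi)
    (hord : ∀ (t : ℝ) (i j : Fin N), i < j → τ t j < τ t i) :
    (∀ (t : ℝ) (i : Fin N),
        HasDerivAt (fun s => τ s i) (fderiv ℝ V (τ t) (Pi.single i 1)) t)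
      ↔
    (∀ (t : ℝ) (i : Fin N),
        HasDerivAt (fun s => Real.cos (τ s i))
          ((p - q) - (p + q) * Real.cos (τ t i)
            + 2 * ∑ j ∈ (univ : Finset (Fin N)).erase i,
                (1 - Real.cos (τ t i) * Real.cos (τ t j))
                  / (Real.cos (τ t i) - Real.cos (τ t j))) t) := by
  have pi_pos := Real.pi_pos
  -- basic positivity facts
  have hsin : ∀ t j, 0 < Real.sin (τ t j) := fun t j =>
    Real.sin_pos_of_pos_of_lt_pi (hrange t j).1 (hrange t j).2
  have hsin2 : ∀ t j, 0 < Real.sin (τ t j / 2) := fun t j =>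
    Real.sin_pos_of_pos_of_lt_pi (by linarith [(hrange t j).1])
      (by linarith [(hrange t j).2])
  have hsum : ∀ t j k, 0 < Real.sin ((τ t j + τ t k) / 2) := fun t j k =>
    Real.sin_pos_of_pos_of_lt_pi (by linarith [(hrange t j).1, (hrange t k).1])
      (by linarith [(hrange t j).2, (hrange t k).2])
  have hτne : ∀ t (j k : Fin N), j ≠ k → τ t j ≠ τ t k := by
    intro t j k hjk
    rcases lt_or_gt_of_ne hjk with h | h
    · exact ne_of_gt (hord t j k h)
    · exact ne_of_lt (hord t k j h)
  have hdiffne : ∀ t (j k : Fin N), j ≠ k → Real.sin ((τ t j - τ t k) / 2) ≠ 0 := by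
    intro t j k hjk h0
    rw [Real.sin_eq_zero_iff_of_lt_of_lt
      (by linarith [(hrange t j).1, (hrange t k).2])
      (by linarith [(hrange t j).2, (hrange t k).1])] at h0
    exact hτne t j k hjk (by linarith)
  -- symmetrized form of V
  have hV2 : ∀ x : Fin N → ℝ,
      V x = 2 * (q - p) * ∑ i : Fin N, Real.log (Real.sin (x i / 2))
        + 2 * (p + 1 - N) * ∑ i : Fin N, Real.log (Real.sin (x i))
        + ∑ j : Fin N, ∑ k ∈ univ.erase j,
            (Real.log (Real.sin ((x j - x k) / 2)) + Real.log (Real.sin ((x j + x k) / 2))) := by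
    intro x
    rw [hV x, ← pairsym' x]
  -- the gradient
  set G : ℝ → Fin N → ℝ := fun t i =>
    (q - p) * (Real.cos (τ t i / 2) / Real.sin (τ t i / 2))
      + (2 * (p + 1 - N)) * (Real.cos (τ t i) / Real.sin (τ t i))
      + ∑ j ∈ univ.erase i,
          (Real.cos ((τ t i - τ t j) / 2) / Real.sin ((τ t i - τ t j) / 2)
            + Real.cos ((τ t i + τ t j) / 2) / Real.sin ((τ t i + τ t j) / 2)) with hG
  have key : ∀ (t : ℝ) (i : Fin N), fderiv ℝ V (τ t) (Pi.single i 1) = G t i := by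
    intro t i
    set δ : Fin N → ℝ := fun j => if j = i then 1 else 0 with hδ
    set φ : Fin N → ℝ → ℝ := fun j s => τ t j + s * δ j with hφdef
    have hφ : ∀ j, HasDerivAt (fun s => φ j s) (δ j) 0 := by
      intro j
      simpa [hφdef] using ((hasDerivAt_id (0:ℝ)).mul_const (δ j)).const_add (τ t j)
    have hφ0 : ∀ j, φ j 0 = τ t j := by intro j; simp [hφdef]
    -- differentiability of V at τ t
    have hdiff : DifferentiableAt ℝ V (τ t) := by
      rw [show V = fun x => 2 * (q - p) * ∑ i : Fin N, Real.log (Real.sin (x i / 2))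
        + 2 * (p + 1 - N) * ∑ i : Fin N, Real.log (Real.sin (x i))
        + ∑ j : Fin N, ∑ k ∈ univ.erase j,
            (Real.log (Real.sin ((x j - x k) / 2)) + Real.log (Real.sin ((x j + x k) / 2)))
        from funext hV2]
      simp only [div_eq_mul_inv]
      refine DifferentiableAt.add (DifferentiableAt.add ?_ ?_) ?_
      · refine DifferentiableAt.const_mul (DifferentiableAt.fun_sum fun j _ => ?_) _
        exact (((differentiableAt_apply j (τ t)).mul_const _).sin).log
          (by simpa [div_eq_mul_inv] using ne_of_gt (hsin2 t j))
      · refine DifferentiableAt.const_mul (DifferentiableAt.fun_sum fun j _ => ?_) _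
        exact ((differentiableAt_apply j (τ t)).sin).log (ne_of_gt (hsin t j))
      · refine DifferentiableAt.fun_sum fun j _ => DifferentiableAt.fun_sum fun k hk => ?_
        have hjk : j ≠ k := ((Finset.mem_erase.mp hk).1).symm
        refine DifferentiableAt.add ?_ ?_
        · exact ((((differentiableAt_apply j (τ t)).sub
            (differentiableAt_apply k (τ t))).mul_const _).sin).log
            (by simpa [div_eq_mul_inv] using hdiffne t j k hjk)
        · exact ((((differentiableAt_apply j (τ t)).add
            (differentiableAt_apply k (τ t))).mul_const _).sin).log
            (by simpa [div_eq_mul_inv] using ne_of_gt (hsum t j k))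
    -- directional derivative along the line s ↦ τ t + s • Pi.single i 1
    have h0 : τ t + (0:ℝ) • (Pi.single i 1 : Fin N → ℝ) = τ t := by simp
    have hline : HasDerivAt (fun s : ℝ => τ t + s • (Pi.single i 1 : Fin N → ℝ)) (Pi.single i 1) 0 := by
      simpa using ((hasDerivAt_id (0:ℝ)).smul_const (Pi.single i 1 : Fin N → ℝ)).const_add (τ t)
    have hF : HasDerivAt (fun s : ℝ => V (τ t + s • (Pi.single i 1 : Fin N → ℝ)))
        (fderiv ℝ V (τ t) (Pi.single i 1)) 0 := by
      have h := HasFDerivAt.comp_hasDerivAt 0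
        (show HasFDerivAt V (fderiv ℝ V (τ t)) (τ t + (0:ℝ) • (Pi.single i 1 : Fin N → ℝ)) by
          rw [h0]; exact hdiff.hasFDerivAt) hline
      exact h
    -- explicit one-dimensional derivative
    have hfeq : (fun s : ℝ => V (τ t + s • (Pi.single i 1 : Fin N → ℝ))) = fun s =>
        2 * (q - p) * ∑ j : Fin N, Real.log (Real.sin (φ j s / 2))
        + 2 * (p + 1 - N) * ∑ j : Fin N, Real.log (Real.sin (φ j s))
        + ∑ j : Fin N, ∑ k ∈ univ.erase j,
            (Real.log (Real.sin ((φ j s - φ k s) / 2))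
              + Real.log (Real.sin ((φ j s + φ k s) / 2))) := by
      funext s
      rw [hV2]
      simp only [hφdef, hδ, Pi.add_apply, Pi.smul_apply, Pi.single_apply, smul_eq_mul]
    have hA : ∀ j ∈ (univ : Finset (Fin N)), HasDerivAt (fun s => Real.log (Real.sin (φ j s / 2)))
        (Real.cos (τ t j / 2) * (δ j / 2) / Real.sin (τ t j / 2)) 0 := by
      intro j _
      have h := (((hφ j).div_const 2).sin).log
        (by rw [show φ j 0 / 2 = τ t j / 2 by rw [hφ0]]; exact ne_of_gt (hsin2 t j))
      simpa only [hφ0] using h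
    have hB : ∀ j ∈ (univ : Finset (Fin N)), HasDerivAt (fun s => Real.log (Real.sin (φ j s)))
        (Real.cos (τ t j) * δ j / Real.sin (τ t j)) 0 := by
      intro j _
      have h := ((hφ j).sin).log (by rw [hφ0]; exact ne_of_gt (hsin t j))
      simpa only [hφ0] using h
    have hC : ∀ j ∈ (univ : Finset (Fin N)), ∀ k ∈ univ.erase j,
        HasDerivAt (fun s => Real.log (Real.sin ((φ j s - φ k s) / 2))
            + Real.log (Real.sin ((φ j s + φ k s) / 2)))
          (Real.cos ((τ t j - τ t k) / 2) * ((δ j - δ k) / 2) / Real.sin ((τ t j - τ t k) / 2)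
            + Real.cos ((τ t j + τ t k) / 2) * ((δ j + δ k) / 2) / Real.sin ((τ t j + τ t k) / 2))
          0 := by
      intro j _ k hk
      have hjk : j ≠ k := ((Finset.mem_erase.mp hk).1).symm
      have h1 := ((((hφ j).fun_sub (hφ k)).div_const 2).sin).log
        (by rw [show (φ j 0 - φ k 0) / 2 = (τ t j - τ t k) / 2 by rw [hφ0, hφ0]]
            exact hdiffne t j k hjk)
      have h2 := ((((hφ j).fun_add (hφ k)).div_const 2).sin).log
        (by rw [show (φ j 0 + φ k 0) / 2 = (τ t j + τ t k) / 2 by rw [hφ0, hφ0]]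
            exact ne_of_gt (hsum t j k))
      simpa only [hφ0] using h1.fun_add h2
    have hF2 : HasDerivAt (fun s : ℝ => V (τ t + s • (Pi.single i 1 : Fin N → ℝ)))
        (2 * (q - p) * ∑ j : Fin N, Real.cos (τ t j / 2) * (δ j / 2) / Real.sin (τ t j / 2)
          + 2 * (p + 1 - N) * ∑ j : Fin N, Real.cos (τ t j) * δ j / Real.sin (τ t j)
          + ∑ j : Fin N, ∑ k ∈ univ.erase j,
              (Real.cos ((τ t j - τ t k) / 2) * ((δ j - δ k) / 2)
                  / Real.sin ((τ t j - τ t k) / 2)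
                + Real.cos ((τ t j + τ t k) / 2) * ((δ j + δ k) / 2)
                  / Real.sin ((τ t j + τ t k) / 2))) 0 := by
      rw [hfeq]
      exact ((HasDerivAt.fun_sum hA).const_mul _).fun_add ((HasDerivAt.fun_sum hB).const_mul _)
        |>.fun_add (HasDerivAt.fun_sum fun j hj => HasDerivAt.fun_sum (hC j hj))
    have hD := hF.unique hF2
    rw [hD]
    -- now evaluate the sums
    have e1 : ∑ j : Fin N, Real.cos (τ t j / 2) * (δ j / 2) / Real.sin (τ t j / 2)
        = Real.cos (τ t i / 2) * ((1:ℝ) / 2) / Real.sin (τ t i / 2) := by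
      rw [Finset.sum_eq_single i]
      · simp [hδ]
      · intro j _ hj; simp [hδ, hj]
      · simp
    have e2 : ∑ j : Fin N, Real.cos (τ t j) * δ j / Real.sin (τ t j)
        = Real.cos (τ t i) / Real.sin (τ t i) := by
      rw [Finset.sum_eq_single i]
      · simp [hδ]
      · intro j _ hj; simp [hδ, hj]
      · simp
    set X : Fin N → Fin N → ℝ := fun j k =>
      (Real.cos ((τ t j - τ t k) / 2) / Real.sin ((τ t j - τ t k) / 2)
        + Real.cos ((τ t j + τ t k) / 2) / Real.sin ((τ t j + τ t k) / 2)) / 2 with hX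
    set Y : Fin N → Fin N → ℝ := fun j k =>
      (-(Real.cos ((τ t j - τ t k) / 2) / Real.sin ((τ t j - τ t k) / 2))
        + Real.cos ((τ t j + τ t k) / 2) / Real.sin ((τ t j + τ t k) / 2)) / 2 with hY
    have esplit : ∀ j k : Fin N,
        Real.cos ((τ t j - τ t k) / 2) * ((δ j - δ k) / 2) / Real.sin ((τ t j - τ t k) / 2)
          + Real.cos ((τ t j + τ t k) / 2) * ((δ j + δ k) / 2) / Real.sin ((τ t j + τ t k) / 2)
        = δ j * X j k + δ k * Y j k := by
      intro j k
      simp only [hX, hY]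
      ring
    have e3 : ∑ j : Fin N, ∑ k ∈ univ.erase j,
        (Real.cos ((τ t j - τ t k) / 2) * ((δ j - δ k) / 2) / Real.sin ((τ t j - τ t k) / 2)
          + Real.cos ((τ t j + τ t k) / 2) * ((δ j + δ k) / 2) / Real.sin ((τ t j + τ t k) / 2))
        = ∑ j ∈ univ.erase i,
            (Real.cos ((τ t i - τ t j) / 2) / Real.sin ((τ t i - τ t j) / 2)
              + Real.cos ((τ t i + τ t j) / 2) / Real.sin ((τ t i + τ t j) / 2)) := by
      have step1 : ∀ j : Fin N, ∑ k ∈ univ.erase j,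
          (Real.cos ((τ t j - τ t k) / 2) * ((δ j - δ k) / 2) / Real.sin ((τ t j - τ t k) / 2)
            + Real.cos ((τ t j + τ t k) / 2) * ((δ j + δ k) / 2)
              / Real.sin ((τ t j + τ t k) / 2))
          = ∑ k ∈ univ.erase j, (δ j * X j k + δ k * Y j k) :=
        fun j => Finset.sum_congr rfl fun k _ => esplit j k
      rw [Finset.sum_congr rfl fun j _ => step1 j]
      rw [Finset.sum_congr rfl fun j _ => Finset.sum_add_distrib, Finset.sum_add_distrib]
      have p1 : ∑ j : Fin N, ∑ k ∈ univ.erase j, δ j * X j k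
          = ∑ k ∈ univ.erase i, X i k := by
        have : ∀ j : Fin N, ∑ k ∈ univ.erase j, δ j * X j k
            = δ j * ∑ k ∈ univ.erase j, X j k := fun j => (Finset.mul_sum _ _ _).symm
        rw [Finset.sum_congr rfl fun j _ => this j]
        rw [Finset.sum_eq_single i]
        · simp [hδ]
        · intro j _ hj; simp [hδ, hj]
        · simp
      have p2 : ∑ j : Fin N, ∑ k ∈ univ.erase j, δ k * Y j k
          = ∑ j ∈ univ.erase i, Y j i := by
        have hcomm := Finset.sum_comm' (s := (univ : Finset (Fin N)))
          (t := fun j => univ.erase j) (s' := fun k => univ.erase k)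
          (t' := (univ : Finset (Fin N)))
          (fun x y => by
            simp only [Finset.mem_univ, Finset.mem_erase, true_and, and_true]
            exact ne_comm)
          (f := fun j k => δ k * Y j k)
        rw [hcomm]
        have : ∀ k : Fin N, ∑ j ∈ univ.erase k, δ k * Y j k
            = δ k * ∑ j ∈ univ.erase k, Y j k := fun k => (Finset.mul_sum _ _ _).symm
        rw [Finset.sum_congr rfl fun k _ => this k]
        rw [Finset.sum_eq_single i]
        · simp [hδ]
        · intro j _ hj; simp [hδ, hj]
        · simp
      rw [p1, p2]
      rw [← Finset.sum_add_distrib]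
      refine Finset.sum_congr rfl fun j hj => ?_
      simp only [hX, hY]
      rw [show (τ t j - τ t i) / 2 = -((τ t i - τ t j) / 2) by ring, Real.cos_neg,
        Real.sin_neg, show τ t j + τ t i = τ t i + τ t j by ring]
      ring
    rw [e1, e2, e3, hG]
    ring
  -- key algebraic identity: -sin * G = RHS
  have hRG : ∀ (t : ℝ) (i : Fin N),
      -Real.sin (τ t i) * G t i
        = (p - q) - (p + q) * Real.cos (τ t i)
          + 2 * ∑ j ∈ (univ : Finset (Fin N)).erase i,
              (1 - Real.cos (τ t i) * Real.cos (τ t j))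
                / (Real.cos (τ t i) - Real.cos (τ t j)) := by
    intro t i
    have hterm : ∀ j ∈ (univ : Finset (Fin N)).erase i,
        -Real.sin (τ t i) * (Real.cos ((τ t i - τ t j) / 2) / Real.sin ((τ t i - τ t j) / 2)
            + Real.cos ((τ t i + τ t j) / 2) / Real.sin ((τ t i + τ t j) / 2))
          = 2 * (1 - Real.cos (τ t i) * Real.cos (τ t j))
              / (Real.cos (τ t i) - Real.cos (τ t j)) - 2 * Real.cos (τ t i) := by
      intro j hj
      have hji : j ≠ i := (Finset.mem_erase.mp hj).1
      have h := pairId' ((τ t i - τ t j) / 2) ((τ t i + τ t j) / 2)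
        (hdiffne t i j hji.symm) (ne_of_gt (hsum t i j))
      rw [show (τ t i - τ t j) / 2 + (τ t i + τ t j) / 2 = τ t i by ring,
        show (τ t i + τ t j) / 2 - (τ t i - τ t j) / 2 = τ t j by ring] at h
      exact h
    have hN : 1 ≤ N := i.pos
    have hcard : ((univ : Finset (Fin N)).erase i).card = N - 1 := by
      rw [Finset.card_erase_of_mem (Finset.mem_univ i), Finset.card_univ, Fintype.card_fin]
    have expand : -Real.sin (τ t i) * G t i
        = (q - p) * (-(Real.sin (τ t i) * (Real.cos (τ t i / 2) / Real.sin (τ t i / 2))))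
          + (2 * (p + 1 - N)) * (-(Real.sin (τ t i) * (Real.cos (τ t i) / Real.sin (τ t i))))
          + ∑ j ∈ (univ : Finset (Fin N)).erase i,
              (-Real.sin (τ t i) * (Real.cos ((τ t i - τ t j) / 2)
                  / Real.sin ((τ t i - τ t j) / 2)
                + Real.cos ((τ t i + τ t j) / 2) / Real.sin ((τ t i + τ t j) / 2))) := by
      simp only [hG]
      rw [← Finset.mul_sum]
      ring
    rw [expand, cotHalf' _ (ne_of_gt (hsin2 t i)),
      show Real.sin (τ t i) * (Real.cos (τ t i) / Real.sin (τ t i)) = Real.cos (τ t i) by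
        rw [mul_comm, div_mul_cancel₀ _ (ne_of_gt (hsin t i))],
      Finset.sum_congr rfl hterm, Finset.sum_sub_distrib, Finset.sum_const, hcard]
    simp only [nsmul_eq_mul, mul_div_assoc]
    rw [← Finset.mul_sum, Nat.cast_sub hN, Nat.cast_one]
    ring
  have hval : ∀ (t : ℝ) (i : Fin N), Real.cos (τ t i) ≠ -1 ∧ Real.cos (τ t i) ≠ 1 := by
    intro t i
    constructor
    · have h := Real.cos_lt_cos_of_nonneg_of_le_pi (le_of_lt (hrange t i).1) le_rfl
        (hrange t i).2
      rw [Real.cos_pi] at h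
      linarith
    · have h := Real.cos_lt_cos_of_nonneg_of_le_pi le_rfl (le_of_lt (hrange t i).2)
        (hrange t i).1
      rw [Real.cos_zero] at h
      linarith
  constructor
  · intro h t i
    have h1 := h t i
    rw [key t i] at h1
    simpa only [hRG t i] using h1.cos
  · intro h t i
    have h1 := h t i
    have h2 := (Real.hasDerivAt_arccos (hval t i).1 (hval t i).2).comp t h1
    have hfun : (Real.arccos ∘ fun s => Real.cos (τ s i)) = fun s => τ s i :=
      funext fun s => Real.arccos_cos (le_of_lt (hrange s i).1) (le_of_lt (hrange s i).2)
    rw [hfun] at h2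
    have hsqrt : Real.sqrt (1 - Real.cos (τ t i) ^ 2) = Real.sin (τ t i) := by
      rw [show 1 - Real.cos (τ t i) ^ 2 = Real.sin (τ t i) ^ 2 by
          nlinarith [Real.sin_sq_add_cos_sq (τ t i)],
        Real.sqrt_sq (le_of_lt (hsin t i))]
    have hval2 : -(1 / Real.sqrt (1 - Real.cos (τ t i) ^ 2))
        * ((p - q) - (p + q) * Real.cos (τ t i)
            + 2 * ∑ j ∈ (univ : Finset (Fin N)).erase i,
                (1 - Real.cos (τ t i) * Real.cos (τ t j))
                  / (Real.cos (τ t i) - Real.cos (τ t j))) = G t i := by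
      rw [hsqrt, ← hRG t i]
      have hs := ne_of_gt (hsin t i)
      field_simp
    rw [hval2] at h2
    rw [key t i]
    exact h2
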